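/- For every ε > 0, m ≥ 0, and (x,t) ∈ εℤ² such that t > |x| and (x+t)/ε is even: a₁(x,t,m,ε) = (1+m²ε²)^((1−t/ε)/2) · Σ_{r=0}^{(t−|x|)/2ε} (−1)^r · C((t+x−2ε)/2ε, r) · C((t−x−2ε)/2ε, r) · (mε)^(2r+1), and a₂(x,t,m,ε) = (1+m²ε²)^((1−t/ε)/2) · Σ_{r=1}^{(t−|x|)/2ε} (−1)^r · C((t+x−2ε)/2ε, r) · C((t−x−2ε)/2ε, r−1) · (mε)^(2r), where C(n,k) denotes the binomial coefficient. -/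

import Mathlib

noncomputable section

/-- The `i`-th move of a checker path encoded as `f : Fin n → Bool`
(`true` = upwards-right move `(ε,ε)`, `false` = upwards-left move `(−ε,ε)`);
out-of-range indices default to `true`. -/
def fcStep {n : ℕ} (f : Fin n → Bool) (i : ℕ) : Bool :=
  if h : i < n then f ⟨i, h⟩ else true

/-- The number of turns of the checker path `f`. -/
def fcTurns {n : ℕ} (f : Fin n → Bool) : ℕ :=
  ((Finset.range (n - 1)).filter fun i => fcStep f i ≠ fcStep f (i + 1)).card

/-- The position (in units of `ε`) of the checker path `f` after `i` moves,
starting from the origin. -/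
def fcPos {n : ℕ} (f : Fin n → Bool) (i : ℕ) : ℤ :=
  ∑ j ∈ Finset.range i, (if fcStep f j then (1 : ℤ) else -1)

/-- Checker paths from `(0,0)` to `(εx, εn)` whose first step is to `(ε,ε)`. -/
def fcPaths (n : ℕ) (x : ℤ) : Finset (Fin n → Bool) :=
  Finset.univ.filter fun f =>
    (∀ i : Fin n, (i : ℕ) = 0 → f i = true) ∧ fcPos f n = x

/-- The amplitude `a(εx, εn, m, ε)`. -/
def fcAmp (m ε : ℝ) (x : ℤ) (n : ℕ) : ℂ :=
  (((1 + m ^ 2 * ε ^ 2) ^ ((1 - (n : ℝ)) / 2) : ℝ) : ℂ) * Complex.I *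
    ∑ f ∈ fcPaths n x, (-Complex.I * (m * ε)) ^ fcTurns f

/-- The probability `P(εx, εn, m, ε)` to find the electron at `(εx, εn)`. -/
def fcP (m ε : ℝ) (x : ℤ) (n : ℕ) : ℝ := ‖fcAmp m ε x n‖ ^ 2

def comp' : ℕ → ℕ → ℕ
  | 0, 0 => 1
  | 0, _+1 => 0
  | _+1, 0 => 0
  | q+1, r+1 => Nat.choose q r

lemma comp'_succ (q r : ℕ) : comp' (q+1) (r+1) = comp' q r + comp' q (r+1) := by
  match q, r with
  | 0, 0 => rfl
  | 0, r+1 => simp [comp', Nat.choose_eq_zero_of_lt]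
  | q+1, 0 => simp [comp']
  | q+1, r+1 => simp [comp', Nat.choose_succ_succ]

lemma comp'_zero_succ (r : ℕ) : comp' 0 (r+1) = 0 := rfl
lemma comp'_succ_zero (q : ℕ) : comp' (q+1) 0 = 0 := rfl

def Np (n : ℕ) (X : ℤ) (b : Bool) (t : ℕ) : ℕ :=
  ((fcPaths n X).filter fun f => fcStep f (n-1) = b ∧ fcTurns f = t).card

lemma fcStep_snoc {n : ℕ} (g : Fin n → Bool) (b : Bool) (i : ℕ) :
    fcStep (Fin.snoc g b : Fin (n+1) → Bool) i
      = if h : i < n then fcStep g i else if i = n then b else true := by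
  unfold fcStep
  rcases lt_trichotomy i n with h | h | h
  · rw [dif_pos h, dif_pos (by omega : i < n + 1), dif_pos h]
    exact Fin.snoc_castSucc (α := fun _ => Bool) b g ⟨i, h⟩
  · subst h
    rw [dif_pos (by omega : i < i + 1), dif_neg (by omega), if_pos rfl]
    exact Fin.snoc_last (α := fun _ => Bool) b g
  · rw [dif_neg (by omega), dif_neg (by omega), if_neg (by omega)]

lemma fcPos_snoc {n : ℕ} (g : Fin n → Bool) (b : Bool) (i : ℕ) (hi : i ≤ n) :
    fcPos (Fin.snoc g b : Fin (n+1) → Bool) i = fcPos g i := by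
  unfold fcPos
  refine Finset.sum_congr rfl fun j hj => ?_
  have hj' : j < n := lt_of_lt_of_le (Finset.mem_range.mp hj) hi
  rw [fcStep_snoc, dif_pos hj']

lemma fcPos_snoc_top {n : ℕ} (g : Fin n → Bool) (b : Bool) :
    fcPos (Fin.snoc g b : Fin (n+1) → Bool) (n+1)
      = fcPos g n + (if b then (1:ℤ) else -1) := by
  unfold fcPos
  rw [Finset.sum_range_succ]
  congr 1
  · refine Finset.sum_congr rfl fun j hj => ?_
    rw [fcStep_snoc, dif_pos (Finset.mem_range.mp hj)]
  · rw [fcStep_snoc, dif_neg (by omega), if_pos rfl]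

lemma fcTurns_snoc {n : ℕ} (g : Fin (n+1) → Bool) (b : Bool) :
    fcTurns (Fin.snoc g b : Fin (n+2) → Bool)
      = fcTurns g + (if fcStep g n = b then 0 else 1) := by
  have hsteplt : ∀ i, i < n + 1 →
      fcStep (Fin.snoc g b : Fin (n+2) → Bool) i = fcStep g i := by
    intro i hi
    rw [fcStep_snoc, dif_pos hi]
  have hn2 : fcStep (Fin.snoc g b : Fin (n+2) → Bool) (n+1) = b := by
    rw [fcStep_snoc, dif_neg (by omega), if_pos rfl]
  have hcongr : Finset.filter
      (fun i => fcStep (Fin.snoc g b : Fin (n+2) → Bool) i ≠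
        fcStep (Fin.snoc g b : Fin (n+2) → Bool) (i+1)) (Finset.range n)
      = Finset.filter (fun i => fcStep g i ≠ fcStep g (i+1)) (Finset.range n) := by
    refine Finset.filter_congr fun i hi => ?_
    have hi' := Finset.mem_range.mp hi
    rw [hsteplt i (by omega), hsteplt (i+1) (by omega)]
  show (Finset.filter _ (Finset.range (n+2-1))).card
      = (Finset.filter _ (Finset.range (n+1-1))).card + _
  rw [show n+2-1 = n+1 from rfl, show n+1-1 = n from rfl, Finset.range_add_one,
    Finset.filter_insert]
  by_cases hb : fcStep g n = b
  · rw [if_neg (by simp [hsteplt n (by omega), hn2, hb]), hcongr, if_pos hb]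
    rfl
  · rw [if_pos (by simp [hsteplt n (by omega), hn2, hb]), if_neg hb,
      Finset.card_insert_of_notMem (by simp), hcongr]

lemma mem_fcPaths {n : ℕ} {X : ℤ} {f : Fin (n+1) → Bool} :
    f ∈ fcPaths (n+1) X ↔ (fcStep f 0 = true ∧ fcPos f (n+1) = X) := by
  simp only [fcPaths, Finset.mem_filter, Finset.mem_univ, true_and]
  constructor
  · rintro ⟨h1, h2⟩
    refine ⟨?_, h2⟩
    rw [fcStep, dif_pos (by omega : 0 < n + 1)]
    exact h1 ⟨0, by omega⟩ rfl
  · rintro ⟨h1, h2⟩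
    refine ⟨fun i hi => ?_, h2⟩
    have hie : i = ⟨0, by omega⟩ := Fin.ext hi
    rw [fcStep, dif_pos (by omega : 0 < n + 1)] at h1
    rw [hie]
    exact h1

lemma sum_pm_le (s : Finset ℕ) (P : ℕ → Bool) :
    (∑ j ∈ s, (if P j then (1:ℤ) else -1)) ≤ s.card ∧
    -(s.card : ℤ) ≤ ∑ j ∈ s, (if P j then (1:ℤ) else -1) := by
  constructor
  · calc (∑ j ∈ s, (if P j then (1:ℤ) else -1)) ≤ ∑ _j ∈ s, (1:ℤ) :=
          Finset.sum_le_sum (fun j _ => by split <;> omega)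
      _ = s.card := by simp
  · calc (-(s.card:ℤ)) = ∑ _j ∈ s, (-1:ℤ) := by simp
      _ ≤ _ := Finset.sum_le_sum (fun j _ => by split <;> omega)

lemma fcPos_le {n : ℕ} (f : Fin n → Bool) (i : ℕ) : fcPos f i ≤ i := by
  have := (sum_pm_le (Finset.range i) (fcStep f)).1
  simpa [fcPos] using this

lemma fcPos_first {n : ℕ} (f : Fin n → Bool) (k : ℕ) (h0 : fcStep f 0 = true) :
    2 - (k+1 : ℤ) ≤ fcPos f (k+1) := by
  rw [fcPos, Finset.sum_range_succ', h0, if_pos rfl]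
  have := (sum_pm_le (Finset.range k) (fun j => fcStep f (j+1))).2
  simp only [Finset.card_range] at this
  omega

lemma fcPos_last {n : ℕ} (f : Fin (n+1) → Bool) (hlast : fcStep f n = false) :
    fcPos f (n+1) ≤ (n:ℤ) - 1 := by
  have h := (sum_pm_le (Finset.range n) (fcStep f)).1
  simp only [Finset.card_range] at h
  rw [fcPos, Finset.sum_range_succ, hlast, if_neg (by simp)]
  omega

lemma Np_card_snoc (n : ℕ) (X : ℤ) (b : Bool) (t : ℕ) :
    Np (n+2) X b t
      = ((fcPaths (n+1) (X - (if b then 1 else -1))).filter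
          (fun g => fcTurns g + (if fcStep g n = b then 0 else 1) = t)).card := by
  unfold Np
  have hsnoc : ∀ f : Fin (n+2) → Bool, fcStep f (n+2-1) = b →
      f = Fin.snoc (Fin.init f) b := by
    intro f hlast
    have h1 : f (Fin.last (n+1)) = b := by
      rw [fcStep, dif_pos (by omega : n + 2 - 1 < n + 2)] at hlast
      exact hlast
    conv_lhs => rw [← Fin.snoc_init_self f]
    rw [h1]
  refine Finset.card_bij' (fun f _ => Fin.init f) (fun g _ => Fin.snoc g b) ?_ ?_ ?_ ?_
  · intro f hf
    simp only [Finset.mem_filter] at hf ⊢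
    obtain ⟨hmem, hlast, hturns⟩ := hf
    rw [mem_fcPaths] at hmem
    have hfs := hsnoc f hlast
    obtain ⟨hfirst, hpos⟩ := hmem
    rw [hfs, fcStep_snoc, dif_pos (by omega : 0 < n+1)] at hfirst
    rw [hfs, fcPos_snoc_top] at hpos
    rw [hfs, fcTurns_snoc] at hturns
    refine ⟨mem_fcPaths.mpr ⟨hfirst, by linarith⟩, hturns⟩
  · intro g hg
    simp only [Finset.mem_filter] at hg ⊢
    obtain ⟨hmem, hturn⟩ := hg
    rw [mem_fcPaths] at hmem
    refine ⟨mem_fcPaths.mpr ⟨?_, ?_⟩, ?_, ?_⟩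
    · rw [fcStep_snoc, dif_pos (by omega : 0 < n+1)]
      exact hmem.1
    · rw [fcPos_snoc_top, hmem.2]; ring
    · show fcStep _ (n+2-1) = b
      rw [show n+2-1 = n+1 from rfl, fcStep_snoc, dif_neg (by omega), if_pos rfl]
    · rw [fcTurns_snoc]; exact hturn
  · intro f hf
    simp only [Finset.mem_filter] at hf
    exact (hsnoc f hf.2.1).symm
  · intro g _
    exact Fin.init_snoc (α := fun _ => Bool) b g

lemma Np_succ_succ (n : ℕ) (X : ℤ) (b : Bool) (t : ℕ) :
    Np (n+2) X b t = Np (n+1) (X - (if b then 1 else -1)) b t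
      + (if t = 0 then 0 else Np (n+1) (X - (if b then 1 else -1)) (!b) (t-1)) := by
  rw [Np_card_snoc]
  set s0 := fcPaths (n+1) (X - (if b then (1:ℤ) else -1)) with hs0
  have hsplit := Finset.card_filter_add_card_filter_not
    (s := s0.filter (fun g => fcTurns g + (if fcStep g n = b then 0 else 1) = t))
    (p := fun g => fcStep g n = b)
  rw [← hsplit]
  congr 1
  · unfold Np
    rw [Finset.filter_filter]
    rw [show n+1-1 = n from rfl]
    congr 1
    refine Finset.filter_congr fun g _ => ?_
    by_cases hgb : fcStep g n = b <;> simp [hgb]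
  · rw [Finset.filter_filter]
    by_cases ht : t = 0
    · subst ht
      rw [if_pos rfl]
      rw [Finset.card_eq_zero, Finset.filter_eq_empty_iff]
      intro g _
      by_cases hgb : fcStep g n = b <;> simp [hgb]
    · rw [if_neg ht]
      unfold Np
      rw [show n+1-1 = n from rfl]
      congr 1
      refine Finset.filter_congr fun g _ => ?_
      by_cases hgb : fcStep g n = b
      · simp [hgb, Bool.eq_not_self]
      · have hnb : fcStep g n = !b := by
          cases hb2 : fcStep g n <;> cases b <;> simp_all
        simp only [hnb, Bool.not_eq_self, if_false, Bool.eq_not_self,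
          not_false_iff, and_true, true_and, iff_true, Bool.not_not]
        constructor
        · intro h; omega
        · intro h; omega

lemma Np_eq_zero_of_le (n : ℕ) (X : ℤ) (b : Bool) (t : ℕ) (hn : 1 ≤ n) (h : n ≤ t) :
    Np n X b t = 0 := by
  rw [Np, Finset.card_eq_zero, Finset.filter_eq_empty_iff]
  rintro f _ ⟨_, hturns⟩
  have : fcTurns f ≤ n - 1 := by
    calc fcTurns f ≤ (Finset.range (n-1)).card := Finset.card_filter_le _ _
      _ = n - 1 := Finset.card_range _
  omega

lemma fin_one_fun_eq (f : Fin 1 → Bool) (h : f 0 = true) : f = fun _ => true := by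
  funext i
  have : i = 0 := Subsingleton.elim _ _
  rw [this, h]

lemma Np_one (X : ℤ) (b : Bool) (t : ℕ) :
    Np 1 X b t = if X = 1 ∧ b = true ∧ t = 0 then 1 else 0 := by
  have hstep : ∀ f : Fin 1 → Bool, fcStep f 0 = f 0 := by
    intro f; rw [fcStep, dif_pos (by omega : 0 < 1)]; rfl
  have hpos : ∀ f : Fin 1 → Bool, fcPos f 1 = if f 0 then 1 else -1 := by
    intro f; rw [fcPos, Finset.sum_range_one, hstep]
  have hturn : ∀ f : Fin 1 → Bool, fcTurns f = 0 := by
    intro f; rfl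
  unfold Np fcPaths
  rw [Finset.filter_filter]
  have hset : Finset.univ.filter (fun f : Fin 1 → Bool =>
        ((∀ i : Fin 1, (i : ℕ) = 0 → f i = true) ∧ fcPos f 1 = X) ∧
          fcStep f (1-1) = b ∧ fcTurns f = t)
      = Finset.univ.filter (fun f : Fin 1 → Bool =>
          f 0 = true ∧ X = 1 ∧ b = true ∧ t = 0) := by
    refine Finset.filter_congr fun f _ => ?_
    constructor
    · rintro ⟨⟨hall, hX⟩, hb, ht⟩
      have h0 : f 0 = true := hall 0 rfl
      rw [hpos, h0, if_pos rfl] at hX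
      rw [show (1:ℕ)-1 = 0 from rfl, hstep, h0] at hb
      rw [hturn] at ht
      exact ⟨h0, hX.symm, hb.symm, ht.symm⟩
    · rintro ⟨h0, hX, hb, ht⟩
      refine ⟨⟨fun i hi => ?_, ?_⟩, ?_, ?_⟩
      · have : i = 0 := Fin.ext hi
        rw [this, h0]
      · rw [hpos, h0, if_pos rfl, hX]
      · rw [show (1:ℕ)-1 = 0 from rfl, hstep, h0, hb]
      · rw [hturn, ht]
  rw [hset]
  by_cases h : X = 1 ∧ b = true ∧ t = 0
  · rw [if_pos h]
    have : Finset.univ.filter (fun f : Fin 1 → Bool =>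
        f 0 = true ∧ X = 1 ∧ b = true ∧ t = 0) = {fun _ => true} := by
      apply Finset.ext
      intro f
      simp only [Finset.mem_filter, Finset.mem_univ, true_and, Finset.mem_singleton]
      constructor
      · rintro ⟨h0, _⟩; exact fin_one_fun_eq f h0
      · intro hf; subst hf; exact ⟨rfl, h⟩
    rw [this, Finset.card_singleton]
  · rw [if_neg h, Finset.card_eq_zero, Finset.filter_eq_empty_iff]
    intro f _
    exact fun hc => h hc.2

lemma Np_closed (n : ℕ) : ∀ p q : ℕ, p + q = n + 1 → ∀ t : ℕ,
    (Np (n+1) ((p:ℤ) - q) true t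
        = if t % 2 = 0 then comp' p (t/2 + 1) * comp' q (t/2) else 0)
    ∧ (Np (n+1) ((p:ℤ) - q) false t
        = if t % 2 = 1 then comp' p ((t+1)/2) * comp' q ((t+1)/2) else 0) := by
  induction n with
  | zero =>
    intro p q hpq t
    rcases p with _ | p
    · have hq : q = 1 := by omega
      subst hq
      constructor
      · rw [Np_one, if_neg (by norm_num)]
        by_cases h2 : t % 2 = 0
        · rw [if_pos h2, comp'_zero_succ, Nat.zero_mul]
        · rw [if_neg h2]
      · rw [Np_one, if_neg (by norm_num)]
        by_cases h2 : t % 2 = 1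
        · rw [if_pos h2]
          obtain ⟨r, hr⟩ := Nat.exists_eq_succ_of_ne_zero (show (t+1)/2 ≠ 0 by omega)
          rw [hr, comp'_zero_succ, Nat.zero_mul]
        · rw [if_neg h2]
    · have hp : p = 0 := by omega
      have hq : q = 0 := by omega
      subst hp; subst hq
      constructor
      · rw [Np_one]
        rcases Nat.eq_zero_or_pos t with ht | ht
        · subst ht; simp [comp']
        · rw [if_neg (by omega)]
          by_cases h2 : t % 2 = 0
          · rw [if_pos h2]
            obtain ⟨r, hr⟩ := Nat.exists_eq_succ_of_ne_zero (show t/2 ≠ 0 by omega)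
            rw [hr, comp'_zero_succ, Nat.mul_zero]
          · rw [if_neg h2]
      · rw [Np_one, if_neg (by simp)]
        by_cases h2 : t % 2 = 1
        · rw [if_pos h2]
          obtain ⟨r, hr⟩ := Nat.exists_eq_succ_of_ne_zero (show (t+1)/2 ≠ 0 by omega)
          rw [hr, comp'_zero_succ, Nat.mul_zero]
        · rw [if_neg h2]
  | succ n IH =>
    intro p q hpq t
    constructor
    · -- b = true
      rcases p with _ | p'
      · -- p = 0 : no paths
        have hzero : Np (n+1+1) ((0:ℤ) - (q:ℤ)) true t = 0 := by
          rw [Np, Finset.card_eq_zero, Finset.filter_eq_empty_iff]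
          rintro f hf ⟨_, _⟩
          rw [mem_fcPaths] at hf
          have hb := fcPos_first f (n+1) hf.1
          rw [hf.2] at hb
          omega
        rw [show ((0:ℕ):ℤ) = (0:ℤ) from rfl, hzero, comp'_zero_succ]
        simp
      · -- p = p'+1
        have hrec := Np_succ_succ n ((↑(p'+1) : ℤ) - q) true t
        norm_num at hrec
        have hX : (p':ℤ) + 1 - ↑q - 1 = (p' : ℤ) - ↑q := by ring
        rw [hX] at hrec
        push_cast
        rw [hrec, (IH p' q (by omega) t).1, (IH p' q (by omega) (t-1)).2]
        rcases Nat.eq_zero_or_pos t with ht | ht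
        · subst ht
          norm_num
          rcases q with _ | q''
          · have hp' : p' = n + 1 := by omega
            subst hp'
            simp [comp']
          · simp [comp']
        · rw [if_neg (by omega : ¬ t = 0)]
          by_cases h2 : t % 2 = 0
          · rw [if_pos (by omega : (t-1) % 2 = 1), if_pos h2, if_pos h2,
              show (t-1+1)/2 = t/2 by omega, comp'_succ p' (t/2)]
            ring
          · rw [if_neg (by omega : ¬ (t-1) % 2 = 1), if_neg h2, if_neg h2]
    · -- b = false
      rcases q with _ | q'
      · -- q = 0 : no paths ending with a left move
        have hzero : Np (n+1+1) ((p:ℤ) - (0:ℤ)) false t = 0 := by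
          rw [Np, Finset.card_eq_zero, Finset.filter_eq_empty_iff]
          rintro f hf ⟨hlast, _⟩
          rw [mem_fcPaths] at hf
          have hb := fcPos_last (n := n+1) f hlast
          rw [hf.2] at hb
          omega
        rw [show ((0:ℕ):ℤ) = (0:ℤ) from rfl, hzero]
        by_cases h2 : t % 2 = 1
        · rw [if_pos h2]
          obtain ⟨r, hr⟩ := Nat.exists_eq_succ_of_ne_zero (show (t+1)/2 ≠ 0 by omega)
          rw [hr, comp'_zero_succ, Nat.mul_zero]
        · rw [if_neg h2]
      · -- q = q'+1
        have hrec := Np_succ_succ n ((p:ℤ) - ↑(q'+1)) false t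
        norm_num at hrec
        have hX : (p:ℤ) - ((q':ℤ) + 1) + 1 = (p : ℤ) - ↑q' := by ring
        rw [hX] at hrec
        push_cast
        rw [hrec, (IH p q' (by omega) t).2, (IH p q' (by omega) (t-1)).1]
        by_cases h2 : t % 2 = 1
        · obtain ⟨r, hr⟩ : ∃ r, t = 2*r+1 := ⟨t/2, by omega⟩
          subst hr
          rw [if_pos h2, if_pos h2, if_neg (by omega : ¬ 2*r+1 = 0),
            if_pos (by omega : (2*r+1-1) % 2 = 0),
            show (2*r+1+1)/2 = r+1 by omega, show (2*r+1-1)/2 = r by omega,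
            comp'_succ q' r]
          ring
        · rw [if_neg h2, if_neg h2]
          rcases Nat.eq_zero_or_pos t with ht | ht
          · subst ht; norm_num
          · rw [if_neg (by omega : ¬ t = 0), if_neg (by omega : ¬ (t-1) % 2 = 0)]

lemma fcTurns_le {n : ℕ} (f : Fin n → Bool) : fcTurns f ≤ n - 1 :=
  le_trans (Finset.card_filter_le _ _) (le_of_eq (Finset.card_range _))

lemma sum_paths (n M : ℕ) (hn : 1 ≤ n) (hM : n ≤ M) (X : ℤ) (w : ℂ) :
    ∑ f ∈ fcPaths n X, w ^ fcTurns f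
      = ∑ t ∈ Finset.range M, ((Np n X true t + Np n X false t : ℕ) : ℂ) * w ^ t := by
  rw [← Finset.sum_fiberwise_of_maps_to (g := fcTurns) (t := Finset.range M)
    (fun f _ => Finset.mem_range.mpr (by have := fcTurns_le f; omega))]
  refine Finset.sum_congr rfl fun t _ => ?_
  have h1 : ∑ f ∈ (fcPaths n X).filter (fun f => fcTurns f = t), w ^ fcTurns f
      = ∑ f ∈ (fcPaths n X).filter (fun f => fcTurns f = t), w ^ t := by
    refine Finset.sum_congr rfl fun f hf => ?_
    rw [(Finset.mem_filter.mp hf).2]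
  rw [h1, Finset.sum_const, nsmul_eq_mul]
  congr 1
  norm_cast
  rw [← Finset.card_filter_add_card_filter_not
    (s := (fcPaths n X).filter (fun f => fcTurns f = t))
    (p := fun f => fcStep f (n-1) = true)]
  congr 1
  · rw [Np, Finset.filter_filter]
    congr 1
    refine Finset.filter_congr fun f _ => ?_
    tauto
  · rw [Np, Finset.filter_filter]
    congr 1
    refine Finset.filter_congr fun f _ => ?_
    simp only [Bool.not_eq_true]
    tauto

lemma sum_range_two_mul (M : ℕ) (g : ℕ → ℂ) :
    ∑ t ∈ Finset.range (2*M), g t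
      = ∑ r ∈ Finset.range M, g (2*r) + ∑ r ∈ Finset.range M, g (2*r+1) := by
  induction M with
  | zero => simp
  | succ M ih =>
    rw [show 2*(M+1) = 2*M+1+1 by ring, Finset.sum_range_succ, Finset.sum_range_succ,
      Finset.sum_range_succ (fun r => g (2*r)), Finset.sum_range_succ (fun r => g (2*r+1)), ih]
    ring

lemma wpow_even (m ε : ℝ) (r : ℕ) :
    (-Complex.I * (m*ε)) ^ (2*r) = (((-1)^r * (m*ε)^(2*r) : ℝ) : ℂ) := by
  rw [pow_mul]
  have h2 : (-Complex.I * ((m:ℂ)*ε))^2 = -(((m:ℂ)*ε)^2) := by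
    rw [mul_pow, neg_pow, Complex.I_sq]
    ring
  push_cast
  rw [h2, neg_pow, ← pow_mul]

lemma wpow_odd (m ε : ℝ) (r : ℕ) :
    (-Complex.I * (m*ε)) ^ (2*r+1)
      = -Complex.I * (((-1)^r * (m*ε)^(2*r+1) : ℝ) : ℂ) := by
  rw [pow_succ, wpow_even]
  push_cast
  ring

/-- Explicit formulae for `a₁` and `a₂` at a lattice point `(x,t) = (εX, εn)` with
`t > |x|` and `(x+t)/ε` even. Here `(t+x−2ε)/2ε = (n+X−2)/2`, `(t−x−2ε)/2ε = (n−X−2)/2`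
and `(t−|x|)/2ε = (n−|X|)/2`. -/
theorem stmt15 (m ε : ℝ) (hε : 0 < ε) (hm : 0 ≤ m) (X : ℤ) (n : ℕ)
    (hlt : |X| < (n : ℤ)) (heven : Even (X + (n : ℤ))) :
    (fcAmp m ε X n).re
        = (1 + m ^ 2 * ε ^ 2) ^ ((1 - (n : ℝ)) / 2) *
            ∑ r ∈ Finset.range ((n - X.natAbs) / 2 + 1),
              (-1 : ℝ) ^ r * (Nat.choose ((((n : ℤ) + X - 2) / 2).toNat) r)
                * (Nat.choose ((((n : ℤ) - X - 2) / 2).toNat) r) * (m * ε) ^ (2 * r + 1) ∧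
    (fcAmp m ε X n).im
        = (1 + m ^ 2 * ε ^ 2) ^ ((1 - (n : ℝ)) / 2) *
            ∑ r ∈ Finset.Icc 1 ((n - X.natAbs) / 2),
              (-1 : ℝ) ^ r * (Nat.choose ((((n : ℤ) + X - 2) / 2).toNat) r)
                * (Nat.choose ((((n : ℤ) - X - 2) / 2).toNat) (r - 1)) * (m * ε) ^ (2 * r)
    := by
  obtain ⟨k, hk⟩ := heven
  have h1 : -(n:ℤ) < X := neg_lt_of_abs_lt hlt
  have h2 : X < (n:ℤ) := lt_of_abs_lt hlt
  obtain ⟨p, q, hp, hpq, hp1, hq1⟩ :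
      ∃ p q : ℕ, ((p:ℤ) - q = X ∧ p + q = n ∧ 1 ≤ p ∧ 1 ≤ q) := by
    refine ⟨k.toNat, n - k.toNat, ?_, ?_, ?_, ?_⟩ <;> omega
  obtain ⟨n', rfl⟩ : ∃ n'', n = n'' + 1 := ⟨n - 1, by omega⟩
  obtain ⟨p', rfl⟩ : ∃ p'', p = p'' + 1 := ⟨p - 1, by omega⟩
  obtain ⟨q', rfl⟩ : ∃ q'', q = q'' + 1 := ⟨q - 1, by omega⟩
  subst hp
  set Xe : ℤ := ((p'+1:ℕ):ℤ) - ((q'+1:ℕ):ℤ) with hXe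
  have e1 : ((((n'+1:ℕ):ℤ) + Xe - 2) / 2).toNat = p' := by omega
  have e2 : ((((n'+1:ℕ):ℤ) - Xe - 2) / 2).toNat = q' := by omega
  set K : ℕ := ((n'+1) - Xe.natAbs) / 2 with hK
  set M : ℕ := n' + 1 + K + 1 with hM
  have hNp := Np_closed n' (p'+1) (q'+1) (by omega)
  -- counts at even and odd turn numbers
  have hNodd : ∀ r : ℕ, Np (n'+1) Xe true (2*r+1) + Np (n'+1) Xe false (2*r+1)
      = Nat.choose p' r * Nat.choose q' r := by
    intro r
    obtain ⟨ht, hf⟩ := hNp (2*r+1)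
    rw [ht, hf, if_neg (by omega), if_pos (by omega),
      show (2*r+1+1)/2 = r+1 by omega]
    simp [comp']
  have hNeven : ∀ r : ℕ, Np (n'+1) Xe true (2*r) + Np (n'+1) Xe false (2*r)
      = Nat.choose p' r * comp' (q'+1) r := by
    intro r
    obtain ⟨ht, hf⟩ := hNp (2*r)
    rw [ht, hf, if_pos (by omega), if_neg (by omega),
      show (2*r)/2 = r by omega]
    simp [comp']
  set A : ℝ := ∑ r ∈ Finset.range M,
    ((Np (n'+1) Xe true (2*r) + Np (n'+1) Xe false (2*r) : ℕ) : ℝ)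
      * ((-1)^r * (m*ε)^(2*r)) with hA
  set B : ℝ := ∑ r ∈ Finset.range M,
    ((Np (n'+1) Xe true (2*r+1) + Np (n'+1) Xe false (2*r+1) : ℕ) : ℝ)
      * ((-1)^r * (m*ε)^(2*r+1)) with hB
  have hev : ∑ r ∈ Finset.range M,
      ((Np (n'+1) Xe true (2*r) + Np (n'+1) Xe false (2*r) : ℕ) : ℂ)
        * (-Complex.I * ((m:ℂ)*(ε:ℂ)))^(2*r) = (A : ℂ) := by
    rw [hA]
    push_cast
    refine Finset.sum_congr rfl fun r _ => ?_
    rw [wpow_even]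
    push_cast
    ring
  have hodd : ∑ r ∈ Finset.range M,
      ((Np (n'+1) Xe true (2*r+1) + Np (n'+1) Xe false (2*r+1) : ℕ) : ℂ)
        * (-Complex.I * ((m:ℂ)*(ε:ℂ)))^(2*r+1) = -Complex.I * (B : ℂ) := by
    rw [hB]
    push_cast
    rw [Finset.mul_sum]
    refine Finset.sum_congr rfl fun r _ => ?_
    rw [wpow_odd]
    push_cast
    ring
  have hsum : (∑ f ∈ fcPaths (n'+1) Xe, (-Complex.I * ((m:ℂ) * (ε:ℂ))) ^ fcTurns f)
      = (A:ℂ) + -Complex.I * (B:ℂ) := by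
    rw [sum_paths (n'+1) (2*M) (by omega) (by omega) Xe (-Complex.I * ((m:ℂ)*(ε:ℂ))),
      sum_range_two_mul, hev, hodd]
  have hstmt_t : ∀ r : ℕ, K + 1 ≤ r → Nat.choose p' r * Nat.choose q' r = 0 := by
    intro r hr
    rcases le_total p' q' with hle | hle
    · rw [Nat.choose_eq_zero_of_lt (by omega), Nat.zero_mul]
    · rw [Nat.choose_eq_zero_of_lt (show q' < r by omega), Nat.mul_zero]
  constructor
  · -- real part
    simp only [fcAmp]
    rw [hsum, e1, e2]
    have hre : ((((1 + m ^ 2 * ε ^ 2) ^ ((1 - ((n'+1 : ℕ) : ℝ)) / 2) : ℝ) : ℂ) * Complex.I *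
        ((A:ℂ) + -Complex.I * (B:ℂ))).re
        = (1 + m ^ 2 * ε ^ 2) ^ ((1 - ((n'+1 : ℕ) : ℝ)) / 2) * B := by
      simp [Complex.mul_re, Complex.mul_im]
      try ring
    rw [hre]
    congr 1
    rw [hB]
    refine Eq.trans (Finset.sum_congr rfl fun r _ => ?_)
      (Finset.sum_subset (Finset.range_subset_range.mpr (by omega)) ?_).symm
    · rw [hNodd r]
      push_cast
      ring
    · intro x hx hnx
      simp only [Finset.mem_range, not_lt] at hnx
      rcases Nat.mul_eq_zero.mp (hstmt_t x hnx) with h0 | h0 <;> rw [h0] <;> simp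
  · -- imaginary part
    simp only [fcAmp]
    rw [hsum, e1, e2]
    have him : ((((1 + m ^ 2 * ε ^ 2) ^ ((1 - ((n'+1 : ℕ) : ℝ)) / 2) : ℝ) : ℂ) * Complex.I *
        ((A:ℂ) + -Complex.I * (B:ℂ))).im
        = (1 + m ^ 2 * ε ^ 2) ^ ((1 - ((n'+1 : ℕ) : ℝ)) / 2) * A := by
      simp [Complex.mul_re, Complex.mul_im]
      try ring
    rw [him]
    congr 1
    rw [hA]
    have hss : Finset.Icc 1 K ⊆ Finset.range M := by
      intro x hx
      have := (Finset.mem_Icc.mp hx).2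
      exact Finset.mem_range.mpr (by omega)
    have hv : ∀ x ∈ Finset.range M, x ∉ Finset.Icc 1 K →
        ((Np (n'+1) Xe true (2*x) + Np (n'+1) Xe false (2*x) : ℕ) : ℝ)
          * ((-1)^x * (m*ε)^(2*x)) = 0 := by
      intro x _ hnx
      rw [hNeven x]
      have hx0 : x = 0 ∨ K + 1 ≤ x := by
        simp only [Finset.mem_Icc, not_and, not_le] at hnx
        omega
      rcases hx0 with rfl | hxK
      · simp [comp']
      · rcases le_total p' q' with hle | hle
        · rw [Nat.choose_eq_zero_of_lt (show p' < x by omega)]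
          simp
        · obtain ⟨x', rfl⟩ : ∃ s, x = s + 1 := ⟨x - 1, by omega⟩
          have hcx : comp' (q'+1) (x'+1) = Nat.choose q' x' := rfl
          rw [hcx, Nat.choose_eq_zero_of_lt (show q' < x' by omega)]
          simp
    refine Eq.trans (Finset.sum_subset hss hv).symm ?_
    refine Finset.sum_congr rfl fun r hr => ?_
    rw [hNeven r]
    obtain ⟨r', rfl⟩ : ∃ s, r = s + 1 := ⟨r - 1, by
      have := (Finset.mem_Icc.mp hr).1; omega⟩
    have hc : comp' (q'+1) (r'+1) = Nat.choose q' r' := rfl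
    rw [hc, show r' + 1 - 1 = r' from rfl]
    push_cast
    ring
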